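/- If a = 3/2, then the derived subalgebra [L(3/2,b)_0, L(3/2,b)_0] equals ℂY_{1/2} + L(3/2,b)_1, where L(a,b)_n = span{L_i, M_i, Y_{i+1/2} : i ≥ n}. -/

import Mathlib

/-- For `a = 3/2`, the derived subalgebra
`[L(3/2,b)_0, L(3/2,b)_0]` equals `ℂY_{1/2} + L(3/2,b)_1`, where
`L(a,b)_n = span{L_i, M_i, Y_{i+1/2} : i ≥ n}`.  Below the brackets are the
`TSV(a,b)` annihilation-algebra brackets specialized at `a = 3/2`
(so `2a − 3 = 0` and `a − 1 = 1/2`), and `Y i` encodes `Y_{i+1/2}`. -/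
theorem stmt18 (b : ℂ)
    (g : Type) [LieRing g] [LieAlgebra ℂ g]
    (L Y Mg : ℤ → g)
    (hLL : ∀ m n : ℤ, 0 ≤ m → 0 ≤ n →
      ⁅L m, L n⁆ = (((m : ℂ) - (n : ℂ))) • L (m + n))
    (hLM : ∀ m n : ℤ, 0 ≤ m → 0 ≤ n →
      ⁅L m, Mg n⁆ = (-(n : ℂ)) • Mg (m + n) + (2 * b) • Mg (m + n + 1))
    (hLY : ∀ m q : ℤ, 0 ≤ m → 0 ≤ q →
      ⁅L m, Y q⁆ = ((1 / 2 : ℂ) * ((m : ℂ) + 1) - ((q : ℂ) + 1)) • Y (m + q)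
        + b • Y (m + q + 1))
    (hYY : ∀ p q : ℤ, 0 ≤ p → 0 ≤ q →
      ⁅Y p, Y q⁆ = (((p : ℂ) - (q : ℂ))) • Mg (p + q + 1))
    (hYM : ∀ p n : ℤ, 0 ≤ p → 0 ≤ n → ⁅Y p, Mg n⁆ = 0)
    (hMM : ∀ m n : ℤ, 0 ≤ m → 0 ≤ n → ⁅Mg m, Mg n⁆ = 0)
    (F : ℤ → Submodule ℂ g)
    (hF : ∀ n : ℤ, F n = Submodule.span ℂ
      ((L '' {i | n ≤ i}) ∪ (Mg '' {i | n ≤ i}) ∪ (Y '' {i | n ≤ i}))) :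
    Submodule.span ℂ {z : g | ∃ x ∈ F 0, ∃ y ∈ F 0, z = ⁅x, y⁆} =
      Submodule.span ℂ {Y 0} ⊔ F 1 := by
  set D := Submodule.span ℂ {z : g | ∃ x ∈ F 0, ∃ y ∈ F 0, z = ⁅x, y⁆} with hD
  set R := Submodule.span ℂ {Y 0} ⊔ F 1 with hR
  -- membership in F 0 / F 1
  have hLF : ∀ n i : ℤ, n ≤ i → L i ∈ F n := by
    intro n i hi
    rw [hF n]
    exact Submodule.subset_span (Or.inl (Or.inl ⟨i, hi, rfl⟩))
  have hMF : ∀ n i : ℤ, n ≤ i → Mg i ∈ F n := by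
    intro n i hi
    rw [hF n]
    exact Submodule.subset_span (Or.inl (Or.inr ⟨i, hi, rfl⟩))
  have hYF : ∀ n i : ℤ, n ≤ i → Y i ∈ F n := by
    intro n i hi
    rw [hF n]
    exact Submodule.subset_span (Or.inr ⟨i, hi, rfl⟩)
  -- membership in R
  have hY0R : Y 0 ∈ R := Submodule.mem_sup_left (Submodule.mem_span_singleton_self _)
  have hLR : ∀ i : ℤ, 1 ≤ i → L i ∈ R := fun i hi => Submodule.mem_sup_right (hLF 1 i hi)
  have hMR : ∀ i : ℤ, 1 ≤ i → Mg i ∈ R := fun i hi => Submodule.mem_sup_right (hMF 1 i hi)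
  have hYR : ∀ i : ℤ, 1 ≤ i → Y i ∈ R := fun i hi => Submodule.mem_sup_right (hYF 1 i hi)
  -- brackets of elements of F 0 lie in D
  have hDmem : ∀ x ∈ F 0, ∀ y ∈ F 0, ⁅x, y⁆ ∈ D :=
    fun x hx y hy => Submodule.subset_span ⟨x, hx, y, hy, rfl⟩
  -- Y i ∈ D for i ≥ 1
  have hYD : ∀ i : ℤ, 1 ≤ i → Y i ∈ D := by
    intro i hi
    have key : Y i = (2/3 : ℂ) • (⁅L 1, Y (i-1)⁆ - ⁅L 0, Y i⁆) := by
      rw [hLY 1 (i-1) (by norm_num) (by omega), hLY 0 i (le_refl 0) (by omega)]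
      have e1 : (1 : ℤ) + (i - 1) = i := by ring
      have e3 : (0 : ℤ) + i = i := by ring
      have e4 : (0 : ℤ) + i + 1 = i + 1 := by ring
      rw [e4, e3, e1]
      push_cast
      module
    rw [key]
    exact Submodule.smul_mem _ _ (sub_mem
      (hDmem _ (hLF 0 1 (by norm_num)) _ (hYF 0 (i-1) (by omega)))
      (hDmem _ (hLF 0 0 le_rfl) _ (hYF 0 i (by omega))))
  -- Mg i ∈ D for i ≥ 1
  have hMD : ∀ i : ℤ, 1 ≤ i → Mg i ∈ D := by
    intro i hi
    have key : Mg i = ⁅L 1, Mg (i-1)⁆ - ⁅L 0, Mg i⁆ := by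
      rw [hLM 1 (i-1) (by norm_num) (by omega), hLM 0 i (le_refl 0) (by omega)]
      have e1 : (1 : ℤ) + (i - 1) = i := by ring
      have e3 : (0 : ℤ) + i = i := by ring
      have e4 : (0 : ℤ) + i + 1 = i + 1 := by ring
      rw [e4, e3, e1]
      push_cast
      module
    rw [key]
    exact sub_mem
      (hDmem _ (hLF 0 1 (by norm_num)) _ (hMF 0 (i-1) (by omega)))
      (hDmem _ (hLF 0 0 le_rfl) _ (hMF 0 i (by omega)))
  -- Y 0 ∈ D
  have hY0D : Y 0 ∈ D := by
    have key : Y 0 = (-2 : ℂ) • ⁅L 0, Y 0⁆ + (2 * b) • Y 1 := by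
      rw [hLY 0 0 le_rfl le_rfl]
      norm_num
      module
    rw [key]
    exact add_mem
      (Submodule.smul_mem _ _ (hDmem _ (hLF 0 0 le_rfl) _ (hYF 0 0 le_rfl)))
      (Submodule.smul_mem _ _ (hYD 1 le_rfl))
  -- L i ∈ D for i ≥ 1
  have hLD : ∀ i : ℤ, 1 ≤ i → L i ∈ D := by
    intro i hi
    have hi' : (i : ℂ) ≠ 0 := by
      simp only [ne_eq, Int.cast_eq_zero]; omega
    have key : L i = (-1 / (i : ℂ)) • ⁅L 0, L i⁆ := by
      rw [hLL 0 i le_rfl (by omega), zero_add, smul_smul]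
      have : (-1 / (i:ℂ)) * (((0:ℤ) : ℂ) - (i:ℂ)) = 1 := by push_cast; field_simp; ring
      rw [this, one_smul]
    rw [key]
    exact Submodule.smul_mem _ _ (hDmem _ (hLF 0 0 le_rfl) _ (hLF 0 i (by omega)))
  -- forward inclusion: brackets of generators lie in R
  have genR : ∀ x ∈ ((L '' {i | (0:ℤ) ≤ i}) ∪ (Mg '' {i | (0:ℤ) ≤ i}) ∪ (Y '' {i | (0:ℤ) ≤ i})),
      ∀ y ∈ ((L '' {i | (0:ℤ) ≤ i}) ∪ (Mg '' {i | (0:ℤ) ≤ i}) ∪ (Y '' {i | (0:ℤ) ≤ i})),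
      ⁅x, y⁆ ∈ R := by
    rintro x ((⟨m, hm, rfl⟩ | ⟨m, hm, rfl⟩) | ⟨m, hm, rfl⟩)
      y ((⟨n, hn, rfl⟩ | ⟨n, hn, rfl⟩) | ⟨n, hn, rfl⟩) <;>
      simp only [Set.mem_setOf_eq] at hm hn
    · -- L L
      rw [hLL m n hm hn]
      rcases eq_or_lt_of_le (show (0:ℤ) ≤ m + n by omega) with h | h
      · have hm0 : m = 0 := by omega
        have hn0 : n = 0 := by omega
        subst hm0; subst hn0
        simp
      · exact Submodule.smul_mem _ _ (hLR (m+n) (by omega))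
    · -- L M
      rw [hLM m n hm hn]
      refine add_mem ?_ (Submodule.smul_mem _ _ (hMR (m+n+1) (by omega)))
      rcases eq_or_lt_of_le hn with h | h
      · subst h; simp
      · exact Submodule.smul_mem _ _ (hMR (m+n) (by omega))
    · -- L Y
      rw [hLY m n hm hn]
      refine add_mem ?_ (Submodule.smul_mem _ _ (hYR (m+n+1) (by omega)))
      rcases eq_or_lt_of_le (show (0:ℤ) ≤ m + n by omega) with h | h
      · rw [← h]; exact Submodule.smul_mem _ _ hY0R
      · exact Submodule.smul_mem _ _ (hYR (m+n) (by omega))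
    · -- M L
      rw [← lie_skew, hLM n m hn hm]
      refine neg_mem (add_mem ?_ (Submodule.smul_mem _ _ (hMR (n+m+1) (by omega))))
      rcases eq_or_lt_of_le hm with h | h
      · subst h; simp
      · exact Submodule.smul_mem _ _ (hMR (n+m) (by omega))
    · -- M M
      rw [hMM m n hm hn]; exact zero_mem _
    · -- M Y
      rw [← lie_skew, hYM n m hn hm, neg_zero]; exact zero_mem _
    · -- Y L
      rw [← lie_skew, hLY n m hn hm]
      refine neg_mem (add_mem ?_ (Submodule.smul_mem _ _ (hYR (n+m+1) (by omega))))
      rcases eq_or_lt_of_le (show (0:ℤ) ≤ n + m by omega) with h | h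
      · rw [← h]; exact Submodule.smul_mem _ _ hY0R
      · exact Submodule.smul_mem _ _ (hYR (n+m) (by omega))
    · -- Y M
      rw [hYM m n hm hn]; exact zero_mem _
    · -- Y Y
      rw [hYY m n hm hn]
      exact Submodule.smul_mem _ _ (hMR (m+n+1) (by omega))
  -- bilinear extension
  have key : ∀ x ∈ F 0, ∀ y ∈ F 0, ⁅x, y⁆ ∈ R := by
    intro x hx y hy
    rw [hF 0] at hx hy
    induction hx using Submodule.span_induction with
    | mem x hxg =>
      induction hy using Submodule.span_induction with
      | mem y hyg => exact genR x hxg y hyg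
      | zero => simp
      | add y z _ _ hy hz => rw [lie_add]; exact add_mem hy hz
      | smul c y _ hy => rw [lie_smul]; exact Submodule.smul_mem _ _ hy
    | zero => simp
    | add x z _ _ hx hz => rw [add_lie]; exact add_mem hx hz
    | smul c x _ hx => rw [smul_lie]; exact Submodule.smul_mem _ _ hx
  apply le_antisymm
  · rw [Submodule.span_le]
    rintro z ⟨x, hx, y, hy, rfl⟩
    exact key x hx y hy
  · refine sup_le ?_ ?_
    · rw [Submodule.span_le, Set.singleton_subset_iff]
      exact hY0D
    · rw [hF 1, Submodule.span_le]
      rintro z ((⟨i, hi, rfl⟩ | ⟨i, hi, rfl⟩) | ⟨i, hi, rfl⟩)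
      · exact hLD i hi
      · exact hMD i hi
      · exact hYD i hi
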